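/- Assume q is odd and let R(y) be the 9×9 commutator matrix defined in the context, for y = (y_0, ..., y_8) ∈ F^9. Then R(y) has rank ≤ 2 if and only if y_0 = y_1 = y_2 = y_3 = y_4 = 0, and R(y) has rank 0 if and only if y_0 = y_1 = ... = y_7 = 0. -/

import Mathlib

namespace StmtAux

@[simp] lemma cons_val_five {α : Type*} {m : ℕ} (x : α)
    (u : Fin m.succ.succ.succ.succ.succ → α) :
    Matrix.vecCons x u 5 =
      Matrix.vecHead (Matrix.vecTail (Matrix.vecTail (Matrix.vecTail (Matrix.vecTail u)))) := rfl

@[simp] lemma cons_val_six {α : Type*} {m : ℕ} (x : α)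
    (u : Fin m.succ.succ.succ.succ.succ.succ → α) :
    Matrix.vecCons x u 6 =
      Matrix.vecHead (Matrix.vecTail (Matrix.vecTail (Matrix.vecTail (Matrix.vecTail
        (Matrix.vecTail u))))) := rfl

@[simp] lemma cons_val_seven {α : Type*} {m : ℕ} (x : α)
    (u : Fin m.succ.succ.succ.succ.succ.succ.succ → α) :
    Matrix.vecCons x u 7 =
      Matrix.vecHead (Matrix.vecTail (Matrix.vecTail (Matrix.vecTail (Matrix.vecTail
        (Matrix.vecTail (Matrix.vecTail u)))))) := rfl

@[simp] lemma cons_val_eight {α : Type*} {m : ℕ} (x : α)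
    (u : Fin m.succ.succ.succ.succ.succ.succ.succ.succ → α) :
    Matrix.vecCons x u 8 =
      Matrix.vecHead (Matrix.vecTail (Matrix.vecTail (Matrix.vecTail (Matrix.vecTail
        (Matrix.vecTail (Matrix.vecTail (Matrix.vecTail u))))))) := rfl

variable {F : Type*} [Field F]

/-- A nonzero `3×3` minor forces rank at least 3. -/
lemma rank_ge_three_of_minor (A : Matrix (Fin 9) (Fin 9) F) (r c : Fin 3 → Fin 9)
    (h : (A.submatrix r c).det ≠ 0) : 3 ≤ A.rank := by
  have h1 : A.submatrix r c =
      (((1 : Matrix (Fin 9) (Fin 9) F).submatrix r (Equiv.refl _)) * A) *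
        ((1 : Matrix (Fin 9) (Fin 9) F).submatrix (Equiv.refl _) c) := by
    rw [Matrix.one_submatrix_mul, Matrix.mul_submatrix_one]
    simp
  have h2 : (A.submatrix r c).rank = 3 := by
    rw [Matrix.rank_of_isUnit _ ((Matrix.isUnit_iff_isUnit_det _).mpr (isUnit_iff_ne_zero.mpr h)),
      Fintype.card_fin]
  calc (3 : ℕ) = (A.submatrix r c).rank := h2.symm
    _ ≤ (((1 : Matrix (Fin 9) (Fin 9) F).submatrix r (Equiv.refl _)) * A).rank := by
        rw [h1]; exact Matrix.rank_mul_le_left _ _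
    _ ≤ A.rank := Matrix.rank_mul_le_right _ _

/-- A nonzero kernel vector forces rank at most 2 for a `3×3` matrix. -/
lemma rank_le_two_of_kernel (M : Matrix (Fin 3) (Fin 3) F) (w : Fin 3 → F)
    (hw : w ≠ 0) (h : M.mulVec w = 0) : M.rank ≤ 2 := by
  have hrn : M.rank + Module.finrank F (LinearMap.ker M.mulVecLin) = 3 := by
    have := LinearMap.finrank_range_add_finrank_ker M.mulVecLin
    simpa [Matrix.rank] using this
  have hker : 0 < Module.finrank F (LinearMap.ker M.mulVecLin) := by
    have hmem : w ∈ LinearMap.ker M.mulVecLin := by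
      simpa [LinearMap.mem_ker, Matrix.mulVecLin_apply] using h
    have : Nontrivial (LinearMap.ker M.mulVecLin) :=
      Submodule.nontrivial_iff_ne_bot.mpr (fun hb => hw (by simpa [hb] using hmem))
    exact Module.finrank_pos
  omega

end StmtAux

open StmtAux

/-- The `9×9` commutator matrix `R(y)` of the Lie centralizer of the nilpotent element
`C_{[2,1,1]}(0)`. -/
def R211 (F : Type*) [Field F] (y : Fin 9 → F) : Matrix (Fin 9) (Fin 9) F :=
  !![0, 0, y 4, 0, 0, 0, y 1, y 0, -2 * y 0;
     0, 0, 0, y 4, 0, y 0, 0, -y 1, -2 * y 1;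
     -y 4, 0, 0, 0, 0, -y 3, 0, -y 2, 2 * y 2;
     0, -y 4, 0, 0, 0, 0, -y 2, y 3, 2 * y 3;
     0, 0, 0, 0, 0, 0, 0, 0, 0;
     0, -y 0, y 3, 0, 0, 0, -y 7, 2 * y 5, 0;
     -y 1, 0, 0, y 2, 0, y 7, 0, -2 * y 6, 0;
     -y 0, y 1, y 2, -y 3, 0, -2 * y 5, 2 * y 6, 0, 0;
     2 * y 0, 2 * y 1, -2 * y 2, -2 * y 3, 0, 0, 0, 0, 0]

namespace StmtAux

variable {F : Type*} [Field F]

/-- When `y₀ = ⋯ = y₄ = 0`, the matrix `R211` factors through a `3×3` block. -/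
lemma R211_factor (y : Fin 9 → F)
    (hy0 : y 0 = 0) (hy1 : y 1 = 0) (hy2 : y 2 = 0) (hy3 : y 3 = 0) (hy4 : y 4 = 0) :
    R211 F y =
      (!![0, 0, 0; 0, 0, 0; 0, 0, 0; 0, 0, 0; 0, 0, 0; 1, 0, 0; 0, 1, 0; 0, 0, 1; 0, 0, 0] :
        Matrix (Fin 9) (Fin 3) F) *
      ((!![0, -y 7, 2 * y 5; y 7, 0, -2 * y 6; -2 * y 5, 2 * y 6, 0] : Matrix (Fin 3) (Fin 3) F) *
       (!![0, 0, 0, 0, 0, 1, 0, 0, 0; 0, 0, 0, 0, 0, 0, 1, 0, 0; 0, 0, 0, 0, 0, 0, 0, 1, 0] :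
        Matrix (Fin 3) (Fin 9) F)) := by
  have hz : (0 : Fin 9 → F) = ![0, 0, 0, 0, 0, 0, 0, 0, 0] := by
    funext i; fin_cases i <;> rfl
  have hrhs :
      (!![0, 0, 0; 0, 0, 0; 0, 0, 0; 0, 0, 0; 0, 0, 0; 1, 0, 0; 0, 1, 0; 0, 0, 1; 0, 0, 0] :
        Matrix (Fin 9) (Fin 3) F) *
      ((!![0, -y 7, 2 * y 5; y 7, 0, -2 * y 6; -2 * y 5, 2 * y 6, 0] : Matrix (Fin 3) (Fin 3) F) *
       (!![0, 0, 0, 0, 0, 1, 0, 0, 0; 0, 0, 0, 0, 0, 0, 1, 0, 0; 0, 0, 0, 0, 0, 0, 0, 1, 0] :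
        Matrix (Fin 3) (Fin 9) F)) =
      !![0, 0, 0, 0, 0, 0, 0, 0, 0;
         0, 0, 0, 0, 0, 0, 0, 0, 0;
         0, 0, 0, 0, 0, 0, 0, 0, 0;
         0, 0, 0, 0, 0, 0, 0, 0, 0;
         0, 0, 0, 0, 0, 0, 0, 0, 0;
         0, 0, 0, 0, 0, 0, -y 7, 2 * y 5, 0;
         0, 0, 0, 0, 0, y 7, 0, -2 * y 6, 0;
         0, 0, 0, 0, 0, -2 * y 5, 2 * y 6, 0, 0;
         0, 0, 0, 0, 0, 0, 0, 0, 0] := by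
    simp [hz]
  have hlhs : R211 F y =
      !![0, 0, 0, 0, 0, 0, 0, 0, 0;
         0, 0, 0, 0, 0, 0, 0, 0, 0;
         0, 0, 0, 0, 0, 0, 0, 0, 0;
         0, 0, 0, 0, 0, 0, 0, 0, 0;
         0, 0, 0, 0, 0, 0, 0, 0, 0;
         0, 0, 0, 0, 0, 0, -y 7, 2 * y 5, 0;
         0, 0, 0, 0, 0, y 7, 0, -2 * y 6, 0;
         0, 0, 0, 0, 0, -2 * y 5, 2 * y 6, 0, 0;
         0, 0, 0, 0, 0, 0, 0, 0, 0] := by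
    simp only [R211, hy0, hy1, hy2, hy3, hy4]
    norm_num
  rw [hlhs, hrhs]

/-- When `y₀ = ⋯ = y₇ = 0`, the matrix `R211` vanishes. -/
lemma R211_eq_zero (y : Fin 9 → F)
    (hy0 : y 0 = 0) (hy1 : y 1 = 0) (hy2 : y 2 = 0) (hy3 : y 3 = 0) (hy4 : y 4 = 0)
    (hy5 : y 5 = 0) (hy6 : y 6 = 0) (hy7 : y 7 = 0) : R211 F y = 0 := by
  have hz : (![0, 0, 0, 0, 0, 0, 0, 0, 0] : Fin 9 → F) = 0 := by
    funext i; fin_cases i <;> rfl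
  have hz2 : (!![0, 0, 0, 0, 0, 0, 0, 0, 0;
       0, 0, 0, 0, 0, 0, 0, 0, 0;
       0, 0, 0, 0, 0, 0, 0, 0, 0;
       0, 0, 0, 0, 0, 0, 0, 0, 0;
       0, 0, 0, 0, 0, 0, 0, 0, 0;
       0, 0, 0, 0, 0, 0, 0, 0, 0;
       0, 0, 0, 0, 0, 0, 0, 0, 0;
       0, 0, 0, 0, 0, 0, 0, 0, 0;
       0, 0, 0, 0, 0, 0, 0, 0, 0] : Matrix (Fin 9) (Fin 9) F) = 0 := by
    funext i
    fin_cases i <;> exact hz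
  have hlhs : R211 F y =
      !![0, 0, 0, 0, 0, 0, 0, 0, 0;
         0, 0, 0, 0, 0, 0, 0, 0, 0;
         0, 0, 0, 0, 0, 0, 0, 0, 0;
         0, 0, 0, 0, 0, 0, 0, 0, 0;
         0, 0, 0, 0, 0, 0, 0, 0, 0;
         0, 0, 0, 0, 0, 0, 0, 0, 0;
         0, 0, 0, 0, 0, 0, 0, 0, 0;
         0, 0, 0, 0, 0, 0, 0, 0, 0;
         0, 0, 0, 0, 0, 0, 0, 0, 0] := by
    simp only [R211, hy0, hy1, hy2, hy3, hy4, hy5, hy6, hy7]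
    norm_num
  rw [hlhs, hz2]

end StmtAux

/-- Assume `q` is odd.  Then `R(y)` has rank `≤ 2` iff `y₀ = ⋯ = y₄ = 0`,
and rank `0` iff `y₀ = ⋯ = y₇ = 0`. -/
theorem stmt_15 (F : Type*) [Field F] [Fintype F] (q : ℕ) (hq : Fintype.card F = q)
    (hodd : Odd q) (y : Fin 9 → F) :
    ((R211 F y).rank ≤ 2 ↔ (y 0 = 0 ∧ y 1 = 0 ∧ y 2 = 0 ∧ y 3 = 0 ∧ y 4 = 0)) ∧
    ((R211 F y).rank = 0 ↔
      (y 0 = 0 ∧ y 1 = 0 ∧ y 2 = 0 ∧ y 3 = 0 ∧ y 4 = 0 ∧ y 5 = 0 ∧ y 6 = 0 ∧ y 7 = 0)) := by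
  -- the characteristic is odd, so `2 ≠ 0`
  have h2 : (2 : F) ≠ 0 := by
    intro h20
    haveI : CharP F (ringChar F) := ringChar.charP F
    obtain ⟨n, hp, hcard⟩ := FiniteField.card F (ringChar F)
    have hdvd : ringChar F ∣ 2 :=
      (CharP.cast_eq_zero_iff F (ringChar F) 2).mp (by exact_mod_cast h20)
    have hr2 : ringChar F = 2 := (Nat.prime_dvd_prime_iff_eq hp Nat.prime_two).mp hdvd
    have heven : Even q := by
      rw [← hq, hcard, hr2]
      exact (Nat.even_pow).mpr ⟨even_two, n.pos.ne'⟩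
    exact (Nat.not_odd_iff_even.mpr heven) hodd
  -- forward direction of part 1 : rank ≤ 2 → y₀ = ⋯ = y₄ = 0
  have fwd : (R211 F y).rank ≤ 2 → (y 0 = 0 ∧ y 1 = 0 ∧ y 2 = 0 ∧ y 3 = 0 ∧ y 4 = 0) := by
    intro hrank
    refine ⟨?_, ?_, ?_, ?_, ?_⟩ <;> by_contra hne
    · have hdet : ((R211 F y).submatrix ![0, 1, 8] ![7, 5, 0]).det = 2 * y 0 ^ 3 := by
        rw [Matrix.det_fin_three]; simp [R211]; ring
      have := rank_ge_three_of_minor (R211 F y) ![0, 1, 8] ![7, 5, 0]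
        (by rw [hdet]; exact mul_ne_zero h2 (pow_ne_zero _ hne))
      omega
    · have hdet : ((R211 F y).submatrix ![0, 1, 8] ![6, 7, 1]).det = -(2 * y 1 ^ 3) := by
        rw [Matrix.det_fin_three]; simp [R211]; ring
      have := rank_ge_three_of_minor (R211 F y) ![0, 1, 8] ![6, 7, 1]
        (by rw [hdet]; exact neg_ne_zero.mpr (mul_ne_zero h2 (pow_ne_zero _ hne)))
      omega
    · have hdet : ((R211 F y).submatrix ![2, 3, 8] ![8, 6, 2]).det = 2 * (2 * y 2 ^ 3) := by
        rw [Matrix.det_fin_three]; simp [R211]; ring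
      have := rank_ge_three_of_minor (R211 F y) ![2, 3, 8] ![8, 6, 2]
        (by rw [hdet]; exact mul_ne_zero h2 (mul_ne_zero h2 (pow_ne_zero _ hne)))
      omega
    · have hdet : ((R211 F y).submatrix ![2, 3, 8] ![5, 7, 3]).det = 2 * y 3 ^ 3 := by
        rw [Matrix.det_fin_three]; simp [R211]; ring
      have := rank_ge_three_of_minor (R211 F y) ![2, 3, 8] ![5, 7, 3]
        (by rw [hdet]; exact mul_ne_zero h2 (pow_ne_zero _ hne))
      omega
    · have hdet : ((R211 F y).submatrix ![0, 1, 2] ![2, 3, 0]).det = -(y 4 ^ 3) := by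
        rw [Matrix.det_fin_three]; simp [R211]; ring
      have := rank_ge_three_of_minor (R211 F y) ![0, 1, 2] ![2, 3, 0]
        (by rw [hdet]; exact neg_ne_zero.mpr (pow_ne_zero _ hne))
      omega
  -- backward direction of part 1 : y₀ = ⋯ = y₄ = 0 → rank ≤ 2
  have bwd : (y 0 = 0 ∧ y 1 = 0 ∧ y 2 = 0 ∧ y 3 = 0 ∧ y 4 = 0) → (R211 F y).rank ≤ 2 := by
    rintro ⟨hy0, hy1, hy2, hy3, hy4⟩
    have hfact := R211_factor y hy0 hy1 hy2 hy3 hy4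
    set M : Matrix (Fin 3) (Fin 3) F :=
      !![0, -y 7, 2 * y 5; y 7, 0, -2 * y 6; -2 * y 5, 2 * y 6, 0] with hM
    have hle : (R211 F y).rank ≤ M.rank := by
      rw [hfact]
      exact le_trans (Matrix.rank_mul_le_right _ _) (Matrix.rank_mul_le_left _ _)
    by_cases h567 : y 5 = 0 ∧ y 6 = 0 ∧ y 7 = 0
    · have hM0 : M = 0 := by
        ext i j
        fin_cases i <;> fin_cases j <;>
          simp [hM, h567.1, h567.2.1, h567.2.2, Matrix.vecHead, Matrix.vecTail]
      rw [hM0] at hle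
      simpa using hle.trans (by simp [Matrix.rank_zero])
    · refine hle.trans (rank_le_two_of_kernel M ![2 * y 6, 2 * y 5, y 7] ?_ ?_)
      · intro hw
        apply h567
        have h5 := congrFun hw 1
        have h6 := congrFun hw 0
        have h7 := congrFun hw 2
        simp at h5 h6 h7
        exact ⟨by rcases h5 with h | h; exact absurd h h2; exact h,
          by rcases h6 with h | h; exact absurd h h2; exact h, h7⟩
      · funext k
        fin_cases k <;>
          simp [hM, Matrix.mulVec, dotProduct, Fin.sum_univ_three] <;> ring
  refine ⟨⟨fwd, bwd⟩, ?_⟩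
  constructor
  · intro h0
    -- rank 0 means the matrix is zero
    have hA : R211 F y = 0 := by
      have hb : LinearMap.range (R211 F y).mulVecLin = ⊥ := Submodule.finrank_eq_zero.mp h0
      have hz : (R211 F y).mulVecLin = 0 := LinearMap.range_eq_bot.mp hb
      ext i j
      have h1 : (R211 F y).mulVec (Pi.single j 1) = 0 := by
        rw [← Matrix.mulVecLin_apply, hz]; simp
      simpa using congrFun h1 i
    have e07 : y 0 = 0 := by have := congrFun (congrFun hA 0) 7; simpa [R211] using this
    have e06 : y 1 = 0 := by have := congrFun (congrFun hA 0) 6; simpa [R211] using this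
    have e72 : y 2 = 0 := by have := congrFun (congrFun hA 7) 2; simpa [R211] using this
    have e52 : y 3 = 0 := by have := congrFun (congrFun hA 5) 2; simpa [R211] using this
    have e02 : y 4 = 0 := by have := congrFun (congrFun hA 0) 2; simpa [R211] using this
    have e57 : y 5 = 0 := by
      have := congrFun (congrFun hA 5) 7
      simp [R211] at this
      rcases this with h | h
      · exact absurd h h2
      · exact h
    have e76 : y 6 = 0 := by
      have := congrFun (congrFun hA 7) 6
      simp [R211] at this
      rcases this with h | h
      · exact absurd h h2
      · exact h
    have e65 : y 7 = 0 := by have := congrFun (congrFun hA 6) 5; simpa [R211] using this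
    exact ⟨e07, e06, e72, e52, e02, e57, e76, e65⟩
  · rintro ⟨hy0, hy1, hy2, hy3, hy4, hy5, hy6, hy7⟩
    rw [R211_eq_zero y hy0 hy1 hy2 hy3 hy4 hy5 hy6 hy7]
    exact Matrix.rank_zero
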